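/- For every integer q ≥ 2, gcd( q⁶(q⁶−1)(q²−1) , q⁶(q⁸+q⁴+1) − 1 ) divides 4. -/

import Mathlib

/-- For every integer `q ≥ 2`, `gcd(q⁶(q⁶-1)(q²-1), q⁶(q⁸+q⁴+1) - 1)` divides `4`. -/
theorem d4_g2_gcd (q : ℕ) (hq : 2 ≤ q) :
    Nat.gcd (q ^ 6 * (q ^ 6 - 1) * (q ^ 2 - 1)) (q ^ 6 * (q ^ 8 + q ^ 4 + 1) - 1) ∣ 4 := by
  have hq1 : 1 ≤ q := le_trans (by norm_num) hq
  have h2 : 1 ≤ q ^ 2 := Nat.one_le_pow _ _ hq1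
  have h6 : 1 ≤ q ^ 6 := Nat.one_le_pow _ _ hq1
  have hB : 1 ≤ q ^ 6 * (q ^ 8 + q ^ 4 + 1) :=
    Nat.one_le_iff_ne_zero.mpr (by positivity)
  set B := q ^ 6 * (q ^ 8 + q ^ 4 + 1) - 1 with hBdef
  -- cast facts
  have hBZ : (B : ℤ) = (q : ℤ) ^ 6 * ((q : ℤ) ^ 8 + (q : ℤ) ^ 4 + 1) - 1 := by
    rw [hBdef]; push_cast [Nat.cast_sub hB]; ring
  have h6Z : ((q ^ 6 - 1 : ℕ) : ℤ) = (q : ℤ) ^ 6 - 1 := by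
    push_cast [Nat.cast_sub h6]; ring
  have h2Z : ((q ^ 2 - 1 : ℕ) : ℤ) = (q : ℤ) ^ 2 - 1 := by
    push_cast [Nat.cast_sub h2]; ring
  -- gcd with q^6 is 1
  have hcop : Nat.Coprime B (q ^ 6) := by
    apply Nat.Coprime.pow_right
    have hqB : q ∣ B + 1 := by
      rw [hBdef, Nat.sub_add_cancel hB]
      exact Dvd.dvd.mul_right (dvd_pow_self q (by norm_num)) _
    have h1 : Nat.gcd B q ∣ B + 1 := (Nat.gcd_dvd_right B q).trans hqB
    have h2' : Nat.gcd B q ∣ B := Nat.gcd_dvd_left B q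
    have : Nat.gcd B q ∣ 1 := by simpa using Nat.dvd_sub h1 h2'
    exact Nat.eq_one_of_dvd_one this
  -- gcd B (q^6-1) ∣ 2
  have hg6 : Nat.gcd B (q ^ 6 - 1) ∣ 2 := by
    set d := Nat.gcd B (q ^ 6 - 1) with hd
    have hd1 : (d : ℤ) ∣ (B : ℤ) := Int.natCast_dvd_natCast.mpr (Nat.gcd_dvd_left _ _)
    have hd2 : (d : ℤ) ∣ ((q ^ 6 - 1 : ℕ) : ℤ) := Int.natCast_dvd_natCast.mpr (Nat.gcd_dvd_right _ _)
    rw [hBZ] at hd1; rw [h6Z] at hd2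
    have key : (d : ℤ) ∣ 2 := by
      have := dvd_sub (Dvd.dvd.mul_left hd1 ((q : ℤ) ^ 4 + (q : ℤ) ^ 2 - 1))
        (Dvd.dvd.mul_left hd2 ((q : ℤ) ^ 12 + (q : ℤ) ^ 10 + 2 * (q : ℤ) ^ 6 + (q : ℤ) ^ 4 + (q : ℤ) ^ 2 + 1))
      have heq : ((q : ℤ) ^ 4 + (q : ℤ) ^ 2 - 1) * ((q : ℤ) ^ 6 * ((q : ℤ) ^ 8 + (q : ℤ) ^ 4 + 1) - 1)
          - ((q : ℤ) ^ 12 + (q : ℤ) ^ 10 + 2 * (q : ℤ) ^ 6 + (q : ℤ) ^ 4 + (q : ℤ) ^ 2 + 1) * ((q : ℤ) ^ 6 - 1) = 2 := by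
        ring
      rwa [heq] at this
    exact_mod_cast key
  -- gcd B (q^2-1) ∣ 2
  have hg2 : Nat.gcd B (q ^ 2 - 1) ∣ 2 := by
    set d := Nat.gcd B (q ^ 2 - 1) with hd
    have hd1 : (d : ℤ) ∣ (B : ℤ) := Int.natCast_dvd_natCast.mpr (Nat.gcd_dvd_left _ _)
    have hd2 : (d : ℤ) ∣ ((q ^ 2 - 1 : ℕ) : ℤ) := Int.natCast_dvd_natCast.mpr (Nat.gcd_dvd_right _ _)
    rw [hBZ] at hd1; rw [h2Z] at hd2
    have key : (d : ℤ) ∣ 2 := by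
      have := dvd_sub hd1
        (Dvd.dvd.mul_left hd2 ((q : ℤ) ^ 12 + (q : ℤ) ^ 10 + 2 * (q : ℤ) ^ 8 + 2 * (q : ℤ) ^ 6 + 3 * (q : ℤ) ^ 4 + 3 * (q : ℤ) ^ 2 + 3))
      have heq : ((q : ℤ) ^ 6 * ((q : ℤ) ^ 8 + (q : ℤ) ^ 4 + 1) - 1)
          - ((q : ℤ) ^ 12 + (q : ℤ) ^ 10 + 2 * (q : ℤ) ^ 8 + 2 * (q : ℤ) ^ 6 + 3 * (q : ℤ) ^ 4 + 3 * (q : ℤ) ^ 2 + 3) * ((q : ℤ) ^ 2 - 1) = 2 := by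
        ring
      rwa [heq] at this
    exact_mod_cast key
  -- combine
  rw [Nat.gcd_comm]
  calc Nat.gcd B (q ^ 6 * (q ^ 6 - 1) * (q ^ 2 - 1))
      ∣ Nat.gcd B (q ^ 6 * (q ^ 6 - 1)) * Nat.gcd B (q ^ 2 - 1) := Nat.gcd_mul_right_dvd_mul_gcd _ _ _
    _ ∣ (Nat.gcd B (q ^ 6) * Nat.gcd B (q ^ 6 - 1)) * Nat.gcd B (q ^ 2 - 1) :=
        Nat.mul_dvd_mul_right (Nat.gcd_mul_right_dvd_mul_gcd _ _ _) _
    _ ∣ 4 := by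
        rw [hcop]
        rw [one_mul]
        exact Dvd.dvd.trans (Nat.mul_dvd_mul hg6 hg2) (by norm_num)
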